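/- arXiv:2007.00089 — 2 statements merged into one kernel-verified Lean document; each statement's English description precedes it below -/
import Mathlib

section
/- Let J : [0,1] → ℝ satisfy J''(α) + d²·K(α)·J(α) = 0 with J(1) = 0, J'(1) = -d, where |K(α)| ≤ K_M for all α. Then for all α ∈ [0,1], |J(α)| ≤ (1/√K_M)·sinh(d·√K_M·(1-α)). -/
open intervalIntegral MeasureTheory Set

lemma integral_one_sub_pow (n : ℕ) (t : ℝ) :
    ∫ s in t..1, (1-s)^n = (1-t)^(n+1)/(n+1) := by
  have h : ∀ s : ℝ, HasDerivAt (fun x : ℝ => -(1-x)^(n+1)/(n+1)) ((1-s)^n) s := by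
    intro s
    have h1 : HasDerivAt (fun x : ℝ => (1-x)) (-1) s := by
      simpa using (hasDerivAt_id' s).const_sub (1:ℝ)
    have h2 := (h1.pow (n+1))
    have h3 := (h2.neg.div_const ((n:ℝ)+1))
    refine h3.congr_deriv (Eq.symm ?_)
    push_cast
    field_simp
  rw [intervalIntegral.integral_eq_sub_of_hasDerivAt (fun s _ => h s)
    (Continuous.intervalIntegrable (by fun_prop) _ _)]
  simp
  ring

lemma integral_const_mul_one_sub_pow (c : ℝ) (k : ℕ) (a : ℝ) :
    ∫ t in a..1, c * (1-t)^k = c * ((1-a)^(k+1)/((k:ℝ)+1)) := by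
  rw [intervalIntegral.integral_const_mul, integral_one_sub_pow]

lemma volterra_nonpos (h : ℝ → ℝ) (C : ℝ) (hC : 0 ≤ C)
    (hcont : ContinuousOn h (Set.Icc 0 1))
    (hineq : ∀ α ∈ Set.Icc (0:ℝ) 1, h α ≤ C * ∫ t in α..1, (∫ s in t..1, h s)) :
    ∀ α ∈ Set.Icc (0:ℝ) 1, h α ≤ 0 := by
  obtain ⟨x₀, hx₀, hmax⟩ := IsCompact.exists_isMaxOn isCompact_Icc
    (Set.nonempty_Icc.2 zero_le_one) hcont
  set M : ℝ := max (h x₀) 0 with hM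
  have hM0 : 0 ≤ M := le_max_right _ _
  have hMb : ∀ y ∈ Set.Icc (0:ℝ) 1, h y ≤ M := fun y hy =>
    le_trans (hmax hy) (le_max_left _ _)
  have hint : ∀ t ∈ Set.Icc (0:ℝ) 1, IntervalIntegrable h volume t 1 := by
    intro t ht
    apply ContinuousOn.intervalIntegrable
    apply hcont.mono
    rw [Set.uIcc_of_le ht.2]
    exact Set.Icc_subset_Icc ht.1 le_rfl
  have claim : ∀ n : ℕ, ∀ α ∈ Set.Icc (0:ℝ) 1,
      h α ≤ (M * C^n / (Nat.factorial (2*n) : ℝ)) * (1-α)^(2*n) := by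
    intro n
    induction n with
    | zero => intro α hα; simpa using hMb α hα
    | succ n ih =>
      intro α hα
      set c : ℝ := M * C^n / (Nat.factorial (2*n) : ℝ) with hc
      set c2 : ℝ := c / ((2*n : ℕ) + 1 : ℝ) with hc2
      have inner : ∀ t ∈ Set.Icc (0:ℝ) 1,
          (∫ s in t..1, h s) ≤ c2 * (1-t)^(2*n+1) := by
        intro t ht
        have mono := intervalIntegral.integral_mono_on ht.2 (hint t ht)
          ((Continuous.intervalIntegrable (by fun_prop :
            Continuous (fun s : ℝ => c * (1-s)^(2*n)))) t 1)
          (fun s hs => ih s ⟨le_trans ht.1 hs.1, hs.2⟩)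
        calc (∫ s in t..1, h s) ≤ ∫ s in t..1, c * (1-s)^(2*n) := mono
          _ = c * ((1-t)^(2*n+1)/((2*n : ℕ)+1)) := integral_const_mul_one_sub_pow c (2*n) t
          _ = c2 * (1-t)^(2*n+1) := by rw [hc2]; ring
      have hprim : IntervalIntegrable (fun t => ∫ s in t..1, h s) volume α 1 := by
        apply ContinuousOn.intervalIntegrable
        rw [Set.uIcc_of_le hα.2]
        have h2 : ContinuousOn (fun t => ∫ s in t..1, h s) (Set.uIcc α 1) := by
          apply intervalIntegral.continuousOn_primitive_interval_left
          rw [Set.uIcc_of_le hα.2]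
          exact (hcont.mono (Set.Icc_subset_Icc hα.1 le_rfl)).integrableOn_compact isCompact_Icc
        rwa [Set.uIcc_of_le hα.2] at h2
      have outer : (∫ t in α..1, (∫ s in t..1, h s)) ≤
          c2 * ((1-α)^(2*n+2)/((2*n+1 : ℕ)+1 : ℝ)) := by
        have mono := intervalIntegral.integral_mono_on hα.2 hprim
          ((Continuous.intervalIntegrable (by fun_prop :
            Continuous (fun t : ℝ => c2 * (1-t)^(2*n+1)))) α 1)
          (fun t ht => inner t ⟨le_trans hα.1 ht.1, ht.2⟩)
        calc (∫ t in α..1, (∫ s in t..1, h s)) ≤ ∫ t in α..1, c2 * (1-t)^(2*n+1) := mono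
          _ = c2 * ((1-α)^(2*n+1+1)/((2*n+1 : ℕ)+1 : ℝ)) :=
              integral_const_mul_one_sub_pow c2 (2*n+1) α
      calc h α ≤ C * ∫ t in α..1, (∫ s in t..1, h s) := hineq α hα
        _ ≤ C * (c2 * ((1-α)^(2*n+2)/((2*n+1 : ℕ)+1 : ℝ))) :=
            mul_le_mul_of_nonneg_left outer hC
        _ = (M * C^(n+1) / (Nat.factorial (2*(n+1)) : ℝ)) * (1-α)^(2*(n+1)) := by
            have hf : (Nat.factorial (2*(n+1)) : ℝ) =
                ((2*n : ℕ) + 2 : ℝ) * (((2*n : ℕ) + 1 : ℝ) * (Nat.factorial (2*n) : ℝ)) := by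
              have h2 : 2*(n+1) = (2*n+1)+1 := by ring
              rw [h2, Nat.factorial_succ, Nat.factorial_succ]
              push_cast; ring
            have hF : (0:ℝ) < (Nat.factorial (2*n) : ℝ) := by positivity
            have hD1 : (0:ℝ) < ((2*n : ℕ) + 1 : ℝ) := by positivity
            have hexp : 2*(n+1) = 2*n+2 := by ring
            rw [hexp] at hf ⊢
            rw [hf, hc2, hc]
            push_cast
            field_simp
            ring
  intro α hα
  have hpow : ∀ n : ℕ, (1-α)^(2*n) ≤ 1 := by
    intro n
    apply pow_le_one₀ (by linarith [hα.2]) (by linarith [hα.1])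
  have key : ∀ n : ℕ, h α ≤ M * C^n / (Nat.factorial n : ℝ) := by
    intro n
    have h1 := claim n α hα
    have hc0 : 0 ≤ M * C^n / (Nat.factorial (2*n) : ℝ) := by positivity
    calc h α ≤ (M * C^n / (Nat.factorial (2*n) : ℝ)) * (1-α)^(2*n) := h1
      _ ≤ (M * C^n / (Nat.factorial (2*n) : ℝ)) * 1 := by
          exact mul_le_mul_of_nonneg_left (hpow n) hc0
      _ ≤ M * C^n / (Nat.factorial n : ℝ) := by
          rw [mul_one]
          apply div_le_div_of_nonneg_left ?_ ?_ ?_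
          · positivity
          · positivity
          · exact_mod_cast Nat.factorial_le (by omega)
  have htend : Filter.Tendsto (fun n : ℕ => M * C^n / (Nat.factorial n : ℝ))
      Filter.atTop (nhds 0) := by
    have := FloorSemiring.tendsto_pow_div_factorial_atTop C
    have h2 := this.const_mul M
    simpa [mul_div_assoc] using h2
  exact ge_of_tendsto' htend key

/-- Rauch-type comparison bound for a Jacobi field `J` along a geodesic of
length `d` on a surface with Gaussian curvature bounded by `K_M`. -/
theorem jacobi_sinh_bound (J K : ℝ → ℝ) (d KM : ℝ) (hd : 0 < d) (hKM : 0 < KM)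
    (hK : ContinuousOn K (Set.Icc 0 1))
    (hKb : ∀ α ∈ Set.Icc (0:ℝ) 1, |K α| ≤ KM)
    (hJ : ContDiffOn ℝ 2 J (Set.Icc 0 1))
    (hODE : ∀ α ∈ Set.Icc (0:ℝ) 1, deriv (deriv J) α + d^2 * K α * J α = 0)
    (hJ1 : J 1 = 0) (hJ'1 : deriv J 1 = -d) :
    ∀ α ∈ Set.Icc (0:ℝ) 1,
      |J α| ≤ (1 / Real.sqrt KM) * Real.sinh (d * Real.sqrt KM * (1 - α)) := by
  have hUD : UniqueDiffOn ℝ (Set.Icc (0:ℝ) 1) := uniqueDiffOn_Icc zero_lt_one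
  set J1 : ℝ → ℝ := derivWithin J (Set.Icc 0 1) with hJ1def
  set J2 : ℝ → ℝ := derivWithin J1 (Set.Icc 0 1) with hJ2def
  set c : ℝ := d * Real.sqrt KM with hcdef
  set Cst : ℝ := d^2 * KM with hCst
  have hsq : Real.sqrt KM * Real.sqrt KM = KM := Real.mul_self_sqrt hKM.le
  have hsqpos : 0 < Real.sqrt KM := Real.sqrt_pos.2 hKM
  have hCpos : 0 < Cst := by positivity
  set g : ℝ → ℝ := fun s => (1 / Real.sqrt KM) * Real.sinh (c * (1 - s)) with hgdef
  set g2 : ℝ → ℝ := fun s => d * Real.cosh (c * (1 - s)) with hg2def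
  -- continuity facts
  have hJc : ContinuousOn J (Set.Icc 0 1) := hJ.continuousOn
  have hJ1c : ContinuousOn J1 (Set.Icc 0 1) := hJ.continuousOn_derivWithin hUD (by norm_num)
  have hJ1cd : ContDiffOn ℝ 1 J1 (Set.Icc 0 1) := hJ.derivWithin hUD (by norm_num)
  have hJ2c : ContinuousOn J2 (Set.Icc 0 1) := hJ1cd.continuousOn_derivWithin hUD le_rfl
  -- derivatives at interior points
  have hIoo : ∀ x ∈ Set.Ioo (0:ℝ) 1, Set.Icc (0:ℝ) 1 ∈ nhds x := fun x hx =>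
    Icc_mem_nhds hx.1 hx.2
  have hDJ : ∀ x ∈ Set.Ioo (0:ℝ) 1, HasDerivAt J (J1 x) x := by
    intro x hx
    have h1 : DifferentiableWithinAt ℝ J (Set.Icc 0 1) x :=
      (hJ.differentiableOn (by norm_num)) x (Set.Ioo_subset_Icc_self hx)
    exact h1.hasDerivWithinAt.hasDerivAt (hIoo x hx)
  have hDJ1 : ∀ x ∈ Set.Ioo (0:ℝ) 1, HasDerivAt J1 (J2 x) x := by
    intro x hx
    have h1 : DifferentiableWithinAt ℝ J1 (Set.Icc 0 1) x :=
      (hJ1cd.differentiableOn one_ne_zero) x (Set.Ioo_subset_Icc_self hx)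
    exact h1.hasDerivWithinAt.hasDerivAt (hIoo x hx)
  -- ODE on interior
  have hODE' : ∀ x ∈ Set.Ioo (0:ℝ) 1, J2 x = -(d^2 * K x * J x) := by
    intro x hx
    have hev : deriv J =ᶠ[nhds x] J1 := by
      filter_upwards [isOpen_Ioo.mem_nhds hx] with y hy
      exact (hDJ y hy).deriv
    have h1 : deriv (deriv J) x = deriv J1 x := hev.deriv_eq
    have h2 : deriv J1 x = J2 x := (hDJ1 x hx).deriv
    have h3 := hODE x (Set.Ioo_subset_Icc_self hx)
    rw [h1, h2] at h3
    linarith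
  -- bound |J2| ≤ Cst * |J| on Icc
  have hJ2b : ∀ x ∈ Set.Icc (0:ℝ) 1, |J2 x| ≤ Cst * |J x| := by
    have hclos : closure (Set.Ioo (0:ℝ) 1) = Set.Icc 0 1 := closure_Ioo one_ne_zero.symm
    have hle : ∀ x ∈ Set.Ioo (0:ℝ) 1, |J2 x| ≤ Cst * |J x| := by
      intro x hx
      rw [hODE' x hx, abs_neg, abs_mul, abs_mul, abs_of_nonneg (by positivity : (0:ℝ) ≤ d^2)]
      have h1 : |K x| ≤ KM := hKb x (Set.Ioo_subset_Icc_self hx)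
      calc d^2 * |K x| * |J x| ≤ d^2 * KM * |J x| :=
            mul_le_mul_of_nonneg_right
              (mul_le_mul_of_nonneg_left h1 (by positivity)) (abs_nonneg _)
        _ = Cst * |J x| := rfl
    intro x hx
    rw [← hclos] at hx
    refine le_on_closure hle ?_ ?_ hx <;> rw [hclos]
    · exact continuous_abs.comp_continuousOn hJ2c
    · exact continuousOn_const.mul (continuous_abs.comp_continuousOn hJc)
  -- J1 1 = -d
  have hJ1at1 : J1 1 = -d := by
    have hdiff : DifferentiableAt ℝ J 1 := by
      by_contra hn
      rw [deriv_zero_of_not_differentiableAt hn] at hJ'1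
      linarith
    rw [hJ1def, hdiff.derivWithin (hUD 1 (by norm_num))]
    exact hJ'1
  -- integrability helpers
  have hJint : ∀ t ∈ Set.Icc (0:ℝ) 1, IntervalIntegrable (fun s => |J s|) MeasureTheory.volume t 1 := by
    intro t ht
    apply ContinuousOn.intervalIntegrable
    apply (continuous_abs.comp_continuousOn hJc).mono
    rw [Set.uIcc_of_le ht.2]; exact Set.Icc_subset_Icc ht.1 le_rfl
  have hJ1int : ∀ t ∈ Set.Icc (0:ℝ) 1, IntervalIntegrable J1 MeasureTheory.volume t 1 := by
    intro t ht
    apply ContinuousOn.intervalIntegrable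
    apply hJ1c.mono
    rw [Set.uIcc_of_le ht.2]; exact Set.Icc_subset_Icc ht.1 le_rfl
  have hJ2int : ∀ t ∈ Set.Icc (0:ℝ) 1, IntervalIntegrable J2 MeasureTheory.volume t 1 := by
    intro t ht
    apply ContinuousOn.intervalIntegrable
    apply hJ2c.mono
    rw [Set.uIcc_of_le ht.2]; exact Set.Icc_subset_Icc ht.1 le_rfl
  have hgcont : Continuous g := by
    apply continuous_const.mul
    exact Real.continuous_sinh.comp (continuous_const.mul (continuous_const.sub continuous_id))
  have hg2cont : Continuous g2 := by
    apply continuous_const.mul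
    exact Real.continuous_cosh.comp (continuous_const.mul (continuous_const.sub continuous_id))
  -- FTC for J1 : ∫ t..1 J2 = -d - J1 t
  have ftcJ1 : ∀ t ∈ Set.Icc (0:ℝ) 1, (∫ s in t..1, J2 s) = -d - J1 t := by
    intro t ht
    have h1 := intervalIntegral.integral_eq_sub_of_hasDeriv_right_of_le ht.2
      (hJ1c.mono (Set.Icc_subset_Icc ht.1 le_rfl))
      (fun x hx => ((hDJ1 x ⟨lt_of_le_of_lt ht.1 hx.1, hx.2⟩).hasDerivWithinAt))
      (hJ2int t ht)
    rw [h1, hJ1at1]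
  -- FTC for J : ∫ α..1 J1 = - J α
  have ftcJ : ∀ α ∈ Set.Icc (0:ℝ) 1, (∫ t in α..1, J1 t) = - J α := by
    intro α hα
    have h1 := intervalIntegral.integral_eq_sub_of_hasDeriv_right_of_le hα.2
      (hJc.mono (Set.Icc_subset_Icc hα.1 le_rfl))
      (fun x hx => ((hDJ x ⟨lt_of_le_of_lt hα.1 hx.1, hx.2⟩).hasDerivWithinAt))
      (hJ1int α hα)
    rw [h1, hJ1]; ring
  -- derivatives of g, g2
  have hinner : ∀ x : ℝ, HasDerivAt (fun s : ℝ => c * (1 - s)) (-c) x := by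
    intro x
    have h1 : HasDerivAt (fun s : ℝ => (1 - s)) (-1) x := by
      simpa using (hasDerivAt_id' x).const_sub (1:ℝ)
    simpa using h1.const_mul c
  have hDg2 : ∀ x : ℝ, HasDerivAt g2 (-(Cst * g x)) x := by
    intro x
    have h1 : HasDerivAt (fun s : ℝ => Real.cosh (c * (1 - s)))
        (Real.sinh (c * (1 - x)) * (-c)) x :=
      (Real.hasDerivAt_cosh _).comp x (hinner x)
    have h2 := h1.const_mul d
    refine h2.congr_deriv (Eq.symm ?_)
    have hkey : Cst * (1/Real.sqrt KM) = d * c := by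
      calc Cst * (1/Real.sqrt KM) = d^2 * (KM / Real.sqrt KM) := by rw [hCst]; ring
        _ = d^2 * Real.sqrt KM := by rw [Real.div_sqrt]
        _ = d * c := by rw [hcdef]; ring
    calc -(Cst * g x) = (Cst * (1/Real.sqrt KM)) * (-Real.sinh (c * (1-x))) := by
          simp only [hgdef]; ring
      _ = d * (Real.sinh (c * (1 - x)) * -c) := by rw [hkey]; ring
  have hDg : ∀ x : ℝ, HasDerivAt g (-(g2 x)) x := by
    intro x
    have h1 : HasDerivAt (fun s : ℝ => Real.sinh (c * (1 - s)))
        (Real.cosh (c * (1 - x)) * (-c)) x :=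
      (Real.hasDerivAt_sinh _).comp x (hinner x)
    have h2 := h1.const_mul (1 / Real.sqrt KM)
    refine h2.congr_deriv (Eq.symm ?_)
    have hkey : (1/Real.sqrt KM) * c = d := by
      rw [hcdef]; field_simp
    calc -(g2 x) = -(d * Real.cosh (c * (1-x))) := by simp only [hg2def]
      _ = ((1/Real.sqrt KM) * c) * (-Real.cosh (c * (1-x))) := by rw [hkey]; ring
      _ = 1 / Real.sqrt KM * (Real.cosh (c * (1 - x)) * -c) := by ring
  -- primitives
  have hPgcont : Continuous (fun t => ∫ s in t..1, g s) := by
    have h1 := intervalIntegral.continuous_primitive (μ := MeasureTheory.volume)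
      (fun a b => hgcont.intervalIntegrable a b) 1
    have h2 : (fun t => ∫ s in t..1, g s) = fun t => -(∫ s in (1:ℝ)..t, g s) := by
      funext t; rw [intervalIntegral.integral_symm]
    rw [h2]; exact h1.neg
  -- FTC for g2 : g2 t = d + Cst * ∫ t..1 g
  have ftcg2 : ∀ t : ℝ, g2 t = d + Cst * ∫ s in t..1, g s := by
    intro t
    have h1 := intervalIntegral.integral_eq_sub_of_hasDerivAt
      (f := g2) (f' := fun s => -(Cst * g s)) (a := t) (b := 1)
      (fun x _ => hDg2 x)
      (((continuous_const.mul hgcont).neg).intervalIntegrable t 1)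
    rw [intervalIntegral.integral_neg, intervalIntegral.integral_const_mul] at h1
    have h2 : g2 1 = d := by simp [hg2def]
    rw [h2] at h1
    linarith
  -- FTC for g : g α = ∫ α..1 g2
  have ftcg : ∀ α : ℝ, g α = ∫ t in α..1, g2 t := by
    intro α
    have h1 := intervalIntegral.integral_eq_sub_of_hasDerivAt
      (f := g) (f' := fun t => -(g2 t)) (a := α) (b := 1)
      (fun x _ => hDg x)
      (hg2cont.neg.intervalIntegrable α 1)
    rw [intervalIntegral.integral_neg] at h1
    have h2 : g 1 = 0 := by simp [hgdef]
    rw [h2] at h1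
    linarith
  -- identity Q for g
  have identityQ : ∀ α ∈ Set.Icc (0:ℝ) 1,
      g α = d * (1 - α) + Cst * ∫ t in α..1, (∫ s in t..1, g s) := by
    intro α hα
    have h1 : (∫ t in α..1, g2 t) =
        ∫ t in α..1, (d + Cst * ∫ s in t..1, g s) :=
      intervalIntegral.integral_congr (fun t _ => ftcg2 t)
    have h2 : (∫ t in α..1, (d + Cst * ∫ s in t..1, g s)) =
        (∫ t in α..1, (d:ℝ)) + ∫ t in α..1, Cst * ∫ s in t..1, g s :=
      intervalIntegral.integral_add (intervalIntegrable_const)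
        ((continuous_const.mul hPgcont).intervalIntegrable α 1)
    rw [ftcg α, h1, h2, intervalIntegral.integral_const,
      intervalIntegral.integral_const_mul]
    simp only [smul_eq_mul]
    ring
  -- identity P for J
  have hQJ2cont : ∀ α ∈ Set.Icc (0:ℝ) 1,
      ContinuousOn (fun t => ∫ s in t..1, J2 s) (Set.Icc α 1) := by
    intro α hα
    have h1 : IntegrableOn J2 (Set.uIcc α 1) MeasureTheory.volume := by
      rw [Set.uIcc_of_le hα.2]
      exact (hJ2c.mono (Set.Icc_subset_Icc hα.1 le_rfl)).integrableOn_compact isCompact_Icc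
    have := intervalIntegral.continuousOn_primitive_interval_left h1
    rwa [Set.uIcc_of_le hα.2] at this
  have identityP : ∀ α ∈ Set.Icc (0:ℝ) 1,
      J α = d * (1 - α) + ∫ t in α..1, (∫ s in t..1, J2 s) := by
    intro α hα
    have h0 : J α = ∫ t in α..1, (-(J1 t)) := by
      rw [intervalIntegral.integral_neg, ftcJ α hα]; ring
    have h1 : (∫ t in α..1, (-(J1 t))) =
        ∫ t in α..1, (d + ∫ s in t..1, J2 s) := by
      apply intervalIntegral.integral_congr
      intro t ht
      rw [Set.uIcc_of_le hα.2] at ht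
      have h3 := ftcJ1 t ⟨le_trans hα.1 ht.1, ht.2⟩
      show -J1 t = d + ∫ s in t..1, J2 s
      linarith
    have h2 : (∫ t in α..1, (d + ∫ s in t..1, J2 s)) =
        (∫ t in α..1, (d:ℝ)) + ∫ t in α..1, (∫ s in t..1, J2 s) :=
      intervalIntegral.integral_add (intervalIntegrable_const)
        (ContinuousOn.intervalIntegrable (by rw [Set.uIcc_of_le hα.2]; exact hQJ2cont α hα))
    rw [h0, h1, h2, intervalIntegral.integral_const]
    simp only [smul_eq_mul]
    ring
  -- the Volterra inequality for h := |J| - g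
  have hRcont : ∀ α ∈ Set.Icc (0:ℝ) 1,
      ContinuousOn (fun t => ∫ s in t..1, |J s|) (Set.Icc α 1) := by
    intro α hα
    have h1 : IntegrableOn (fun s => |J s|) (Set.uIcc α 1) MeasureTheory.volume := by
      rw [Set.uIcc_of_le hα.2]
      exact ((continuous_abs.comp_continuousOn hJc).mono
        (Set.Icc_subset_Icc hα.1 le_rfl)).integrableOn_compact isCompact_Icc
    have := intervalIntegral.continuousOn_primitive_interval_left h1
    rwa [Set.uIcc_of_le hα.2] at this
  have hineq : ∀ α ∈ Set.Icc (0:ℝ) 1,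
      |J α| - g α ≤ Cst * ∫ t in α..1, (∫ s in t..1, (|J s| - g s)) := by
    intro α hα
    -- step 1 : |J α| ≤ d(1-α) + ∫ |inner|
    have e1 : |J α| ≤ d * (1 - α) + |∫ t in α..1, (∫ s in t..1, J2 s)| := by
      rw [identityP α hα]
      refine (abs_add_le _ _).trans ?_
      rw [abs_of_nonneg (by nlinarith [hα.2] : (0:ℝ) ≤ d * (1 - α))]
    have e2 : |∫ t in α..1, (∫ s in t..1, J2 s)| ≤
        ∫ t in α..1, |∫ s in t..1, J2 s| :=
      intervalIntegral.abs_integral_le_integral_abs hα.2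
    -- pointwise bound on inner integral
    have e3 : ∀ t ∈ Set.Icc α 1, |∫ s in t..1, J2 s| ≤ Cst * ∫ s in t..1, |J s| := by
      intro t ht
      have ht' : t ∈ Set.Icc (0:ℝ) 1 := ⟨le_trans hα.1 ht.1, ht.2⟩
      calc |∫ s in t..1, J2 s| ≤ ∫ s in t..1, |J2 s| :=
            intervalIntegral.abs_integral_le_integral_abs ht.2
        _ ≤ ∫ s in t..1, Cst * |J s| := by
            apply intervalIntegral.integral_mono_on ht.2 ((hJ2int t ht').abs)
              ((hJint t ht').const_mul Cst)
            intro s hs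
            exact hJ2b s ⟨le_trans ht'.1 hs.1, hs.2⟩
        _ = Cst * ∫ s in t..1, |J s| := intervalIntegral.integral_const_mul _ _
    have e4 : (∫ t in α..1, |∫ s in t..1, J2 s|) ≤
        ∫ t in α..1, Cst * ∫ s in t..1, |J s| := by
      apply intervalIntegral.integral_mono_on hα.2
      · apply ContinuousOn.intervalIntegrable
        rw [Set.uIcc_of_le hα.2]
        exact continuous_abs.comp_continuousOn (hQJ2cont α hα)
      · apply ContinuousOn.intervalIntegrable
        rw [Set.uIcc_of_le hα.2]
        exact continuousOn_const.mul (hRcont α hα)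
      · exact e3
    have e5 : (∫ t in α..1, Cst * ∫ s in t..1, |J s|) =
        Cst * ∫ t in α..1, (∫ s in t..1, |J s|) := intervalIntegral.integral_const_mul _ _
    -- combine
    have e6 : |J α| ≤ d * (1 - α) + Cst * ∫ t in α..1, (∫ s in t..1, |J s|) := by
      calc |J α| ≤ d * (1 - α) + |∫ t in α..1, (∫ s in t..1, J2 s)| := e1
        _ ≤ d * (1 - α) + ∫ t in α..1, |∫ s in t..1, J2 s| := by linarith
        _ ≤ d * (1 - α) + ∫ t in α..1, Cst * ∫ s in t..1, |J s| := by linarith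
        _ = d * (1 - α) + Cst * ∫ t in α..1, (∫ s in t..1, |J s|) := by rw [e5]
    have e7 : (∫ t in α..1, (∫ s in t..1, |J s|)) - (∫ t in α..1, (∫ s in t..1, g s)) =
        ∫ t in α..1, (∫ s in t..1, (|J s| - g s)) := by
      rw [← intervalIntegral.integral_sub]
      · apply intervalIntegral.integral_congr
        intro t ht
        rw [Set.uIcc_of_le hα.2] at ht
        have ht' : t ∈ Set.Icc (0:ℝ) 1 := ⟨le_trans hα.1 ht.1, ht.2⟩
        show (∫ s in t..1, |J s|) - (∫ s in t..1, g s) = ∫ s in t..1, (|J s| - g s)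
        exact (intervalIntegral.integral_sub (hJint t ht')
          (hgcont.intervalIntegrable t 1)).symm
      · apply ContinuousOn.intervalIntegrable
        rw [Set.uIcc_of_le hα.2]
        exact hRcont α hα
      · exact (hPgcont.intervalIntegrable α 1)
    have hgid := identityQ α hα
    nlinarith [e6, e7, hgid]
  -- apply the Volterra lemma
  have hcont : ContinuousOn (fun s => |J s| - g s) (Set.Icc (0:ℝ) 1) :=
    (continuous_abs.comp_continuousOn hJc).sub hgcont.continuousOn
  have hfinal := volterra_nonpos (fun s => |J s| - g s) Cst hCpos.le hcont hineq
  intro α hα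
  have h0 := hfinal α hα
  simp only [hgdef] at h0
  linarith [h0]
end

section
/- With ρ(r) = ∫_0^r s^β·e^{h(s)} ds, β ∈ (−1,0), h continuous with h(0) = h₀, and φ(ρ(r)) = r^β·e^{h(r)}·ψ(r) where ψ is C¹ with ψ(0) = 0 and ψ'(0) = 1, one has lim_{ρ→0⁺} φ(ρ)/ρ = 1 + β, provided additionally that r·h'(r) → 0 as r → 0 (weighted regularity of h). -/
open Set Filter MeasureTheory Topology

/-- The cone-angle computation of Lemma A.1(2): with
`ρ(r) = ∫₀^r s^β e^{h(s)} ds` and `φ(ρ(r)) = r^β e^{h(r)} ψ(r)`, where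
`ψ(0) = 0`, `ψ'(0) = 1` and `r·h'(r) → 0`, one has `φ(ρ)/ρ → 1 + β` as
`ρ → 0⁺`. -/
theorem cone_angle_limit (β r₀ h₀ : ℝ) (h h' ψ φ : ℝ → ℝ)
    (hβ₁ : -1 < β) (hβ₂ : β < 0) (hr₀ : 0 < r₀)
    (hh : ContinuousOn h (Icc 0 r₀)) (hh0 : h 0 = h₀)
    (hh' : ∀ r ∈ Ioo (0:ℝ) r₀, HasDerivAt h (h' r) r)
    (hrh' : Tendsto (fun r => r * h' r) (nhdsWithin 0 (Ioi 0)) (nhds 0))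
    (hψ : ContDiff ℝ 1 ψ) (hψ0 : ψ 0 = 0) (hψ'0 : deriv ψ 0 = 1)
    (hφ : ∀ r ∈ Ioc (0:ℝ) r₀,
      φ (∫ s in (0:ℝ)..r, s ^ β * Real.exp (h s)) = r ^ β * Real.exp (h r) * ψ r) :
    Tendsto (fun ρ => φ ρ / ρ) (nhdsWithin 0 (Ioi 0)) (nhds (1 + β)) := by
  set f : ℝ → ℝ := fun s => s ^ β * Real.exp (h s) with hfdef
  set P : ℝ → ℝ := fun r => ∫ s in (0:ℝ)..r, f s with hPdef
  have hβ0 : (0:ℝ) < 1 + β := by linarith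
  -- integrability
  have hint : IntervalIntegrable f volume 0 r₀ := by
    have h1 : IntervalIntegrable (fun s : ℝ => s ^ β) volume 0 r₀ :=
      intervalIntegral.intervalIntegrable_rpow' hβ₁
    refine h1.mul_continuousOn ?_
    rw [uIcc_of_le hr₀.le]
    exact Real.continuous_exp.comp_continuousOn hh
  have hintx : ∀ x ∈ Icc (0:ℝ) r₀, IntervalIntegrable f volume 0 x := fun x hx =>
    hint.mono_set (by
      rw [uIcc_of_le hx.1, uIcc_of_le hr₀.le]
      exact Icc_subset_Icc le_rfl hx.2)
  -- continuity of primitive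
  have hPcont : ContinuousOn P (Icc 0 r₀) := by
    have := intervalIntegral.continuousOn_primitive_interval' hint left_mem_uIcc
    rwa [uIcc_of_le hr₀.le] at this
  have hP0 : P 0 = 0 := intervalIntegral.integral_same
  have hfpos : ∀ s ∈ Ioo (0:ℝ) r₀, 0 < f s := fun s hs =>
    mul_pos (Real.rpow_pos_of_pos hs.1 β) (Real.exp_pos _)
  have hPpos : ∀ x ∈ Ioc (0:ℝ) r₀, 0 < P x := by
    intro x hx
    exact intervalIntegral.intervalIntegral_pos_of_pos_on (hintx x ⟨hx.1.le, hx.2⟩)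
      (fun s hs => hfpos s ⟨hs.1, lt_of_lt_of_le hs.2 hx.2⟩) hx.1
  -- filter comparison
  have hIccmem : Icc (0:ℝ) r₀ ∈ 𝓝[>] (0:ℝ) :=
    mem_of_superset (Ioo_mem_nhdsGT_of_mem ⟨le_rfl, hr₀⟩)
      (fun x hx => ⟨hx.1.le, hx.2.le⟩)
  have hle : 𝓝[>] (0:ℝ) ≤ 𝓝[Icc 0 r₀] (0:ℝ) := nhdsWithin_le_of_mem hIccmem
  -- h and exp h limits
  have hh_tendsto : Tendsto h (𝓝[>] (0:ℝ)) (𝓝 h₀) := by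
    have := hh 0 ⟨le_rfl, hr₀.le⟩
    rw [ContinuousWithinAt, hh0] at this
    exact this.mono_left hle
  have hexp : Tendsto (fun r => Real.exp (h r)) (𝓝[>] (0:ℝ)) (𝓝 (Real.exp h₀)) :=
    (Real.continuous_exp.continuousAt.tendsto).comp hh_tendsto
  -- P → 0
  have hP0lim : Tendsto P (𝓝[>] (0:ℝ)) (𝓝 0) := by
    have := (hPcont 0 ⟨le_rfl, hr₀.le⟩)
    rw [ContinuousWithinAt, hP0] at this
    exact this.mono_left hle
  -- g = r^(1+β) → 0
  have hg0lim : Tendsto (fun r : ℝ => r ^ (1 + β)) (𝓝[>] (0:ℝ)) (𝓝 0) := by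
    have := (Real.continuousAt_rpow_const 0 (1 + β) (Or.inr hβ0.le)).tendsto
    rw [Real.zero_rpow hβ0.ne'] at this
    exact this.mono_left nhdsWithin_le_nhds
  -- derivatives
  have hfcontAt : ∀ x ∈ Ioo (0:ℝ) r₀, ContinuousAt f x := by
    intro x hx
    exact (Real.continuousAt_rpow_const x β (Or.inl hx.1.ne')).mul
      (Real.continuous_exp.continuousAt.comp (hh' x hx).continuousAt)
  have hPderiv : ∀ x ∈ Ioo (0:ℝ) r₀, HasDerivAt P (f x) x := by
    intro x hx
    refine intervalIntegral.integral_hasDerivAt_right (hintx x ⟨hx.1.le, hx.2.le⟩) ?_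
      (hfcontAt x hx)
    exact ContinuousOn.stronglyMeasurableAtFilter isOpen_Ioo
      (fun y hy => (hfcontAt y hy).continuousWithinAt) x hx
  have hgderiv : ∀ x ∈ Ioo (0:ℝ) r₀,
      HasDerivAt (fun r : ℝ => r ^ (1 + β)) ((1 + β) * x ^ β) x := by
    intro x hx
    have := Real.hasDerivAt_rpow_const (x := x) (p := 1 + β) (Or.inl hx.1.ne')
    simpa using this
  have hg'ne : ∀ x ∈ Ioo (0:ℝ) r₀, (1 + β) * x ^ β ≠ 0 := fun x hx =>
    (mul_pos hβ0 (Real.rpow_pos_of_pos hx.1 β)).ne'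
  -- derivative ratio limit
  have hdiv : Tendsto (fun x => f x / ((1 + β) * x ^ β)) (𝓝[>] (0:ℝ))
      (𝓝 (Real.exp h₀ / (1 + β))) := by
    refine (hexp.div_const (1 + β)).congr' ?_
    filter_upwards [self_mem_nhdsWithin] with x (hx : (0:ℝ) < x)
    have hxb : x ^ β ≠ 0 := (Real.rpow_pos_of_pos hx β).ne'
    field_simp [hfdef]
    ring
  -- L'Hôpital for P / r^(1+β)
  have hPg : Tendsto (fun x => P x / x ^ (1 + β)) (𝓝[>] (0:ℝ))
      (𝓝 (Real.exp h₀ / (1 + β))) :=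
    HasDerivAt.lhopital_zero_right_on_Ioo hr₀ hPderiv hgderiv hg'ne hP0lim hg0lim hdiv
  -- ψ slope limit
  have hψslope : Tendsto (fun x => ψ x / x) (𝓝[>] (0:ℝ)) (𝓝 1) := by
    have hd : HasDerivAt ψ 1 0 := by
      have := ((hψ.differentiable one_ne_zero) 0).hasDerivAt
      rwa [hψ'0] at this
    have h1 := hasDerivAt_iff_tendsto_slope.mp hd
    have h2 := h1.mono_left (nhdsWithin_mono 0 (fun x hx => ne_of_gt hx))
    refine h2.congr fun x => ?_
    simp [slope_def_field, hψ0, div_eq_div_iff]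
  -- numerator ratio limit
  have hN : Tendsto (fun x => (x ^ β * Real.exp (h x) * ψ x) / x ^ (1 + β))
      (𝓝[>] (0:ℝ)) (𝓝 (Real.exp h₀)) := by
    have h1 := hexp.mul hψslope
    rw [mul_one] at h1
    refine h1.congr' ?_
    filter_upwards [self_mem_nhdsWithin] with x (hx : (0:ℝ) < x)
    have hx1 : x ^ (1 + β) = x * x ^ β := by
      rw [Real.rpow_add hx, Real.rpow_one]
    have hxb : x ^ β ≠ 0 := (Real.rpow_pos_of_pos hx β).ne'
    rw [hx1]
    field_simp
  -- main limit in r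
  have hmain : Tendsto (fun r => φ (P r) / P r) (𝓝[>] (0:ℝ)) (𝓝 (1 + β)) := by
    have hne : Real.exp h₀ / (1 + β) ≠ 0 := by positivity
    have hdivlim := hN.div hPg hne
    have heq : Real.exp h₀ / (Real.exp h₀ / (1 + β)) = 1 + β := by
      field_simp
    rw [heq] at hdivlim
    refine hdivlim.congr' ?_
    filter_upwards [Ioo_mem_nhdsGT_of_mem ⟨le_rfl, hr₀⟩] with x hx
    have hx0 : (0:ℝ) < x := hx.1
    have hgne : x ^ (1 + β) ≠ 0 := (Real.rpow_pos_of_pos hx0 _).ne'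
    have hPne : P x ≠ 0 := (hPpos x ⟨hx0, hx.2.le⟩).ne'
    have hEq : φ (P x) = x ^ β * Real.exp (h x) * ψ x := hφ x ⟨hx0, hx.2.le⟩
    simp only [Pi.div_apply]
    rw [div_div_div_cancel_right₀ hgne, hEq]
  -- transfer the limit from r to ρ
  have hmap : 𝓝[>] (0:ℝ) ≤ Filter.map P (𝓝[>] (0:ℝ)) := by
    refine le_map fun s hs => ?_
    obtain ⟨δ, hδ, hδs⟩ := mem_nhdsGT_iff_exists_Ioo_subset.mp hs
    set c : ℝ := min δ r₀ / 2 with hcdef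
    have hmin : 0 < min δ r₀ := lt_min hδ hr₀
    have hc0 : 0 < c := by rw [hcdef]; linarith
    have hcδ : c < δ := by
      have : min δ r₀ ≤ δ := min_le_left _ _
      have h2 : 0 < min δ r₀ := lt_min hδ hr₀
      nlinarith
    have hcr : c ≤ r₀ := by
      have : min δ r₀ ≤ r₀ := min_le_right _ _
      have h2 : 0 < min δ r₀ := lt_min hδ hr₀
      nlinarith
    have hPc : 0 < P c := hPpos c ⟨hc0, hcr⟩
    refine mem_of_superset (Ioo_mem_nhdsGT_of_mem ⟨le_rfl, hPc⟩) ?_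
    intro y hy
    have hIVT : Icc (P 0) (P c) ⊆ P '' Icc 0 c :=
      intermediate_value_Icc hc0.le (hPcont.mono (Icc_subset_Icc le_rfl hcr))
    have hy' : y ∈ Icc (P 0) (P c) := by
      rw [hP0]; exact ⟨hy.1.le, hy.2.le⟩
    obtain ⟨x, hxmem, hxy⟩ := hIVT hy'
    have hx0 : 0 < x := by
      rcases eq_or_lt_of_le hxmem.1 with h0 | h0
      · exfalso; rw [← h0, hP0] at hxy; exact hy.1.ne hxy
      · exact h0
    exact ⟨x, hδs ⟨hx0, lt_of_le_of_lt hxmem.2 hcδ⟩, hxy⟩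
  have hfinal : Tendsto (fun ρ => φ ρ / ρ) (Filter.map P (𝓝[>] (0:ℝ))) (𝓝 (1 + β)) := by
    rw [tendsto_map'_iff]
    exact hmain
  exact hfinal.mono_left hmap
end
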